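/- Let n ≥ 2, p ∈ (0, 1], and let (V_t) be a random process over {0, 1, …, n} adapted to a filtration (F_t), with stopping time S = inf{t : V_t = n}. Assume that for all t, P(V_{t+1} > V_t | F_t)·1{t < S} ≥ p·1{t < S}, and that V_{t+1} ≥ V_t − n always (V is bounded in {0,…,n}). Define X_t = (n/p)^n − (n/p)^{V_t}. Then for all t, (X_t − E[X_{t+1} | F_t])·1{t < S} ≥ 1{t < S}, and consequently E[S] ≤ (n/p)^n, so S is integrable. -/

import Mathlib

open MeasureTheory Filter Set ENNReal

/-- Integrability lemma: a process on fitness levels `{0, …, n}` that increases with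
probability at least `p` each step before hitting `n` satisfies an additive drift
condition for the exponential potential `X_t = (n/p)^n - (n/p)^{V_t}`, whence the
hitting time of `n` has expectation at most `(n/p)^n` and is integrable. -/
theorem integrability_of_hitting_time
    {Ω : Type*} {m0' : MeasurableSpace Ω} (μ : Measure Ω) [IsProbabilityMeasure μ]
    (ℱ : Filtration ℕ m0') (n : ℕ) (hn : 2 ≤ n) (p : ℝ) (hp0 : 0 < p) (hp1 : p ≤ 1)
    (V : ℕ → Ω → ℕ) (hadapt : Adapted ℱ fun t ω => (V t ω : ℝ))
    (hrange : ∀ t ω, V t ω ≤ n)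
    (S : Ω → ℕ∞)
    (hS : ∀ ω, S ω = sInf ((↑) '' {t : ℕ | V t ω = n}))
    (hup : ∀ t : ℕ, ∀ᵐ ω ∂μ,
      p * Set.indicator {ω' | (t : ℕ∞) < S ω'} (fun _ => (1 : ℝ)) ω ≤
        (μ[Set.indicator {ω' | V t ω' < V (t + 1) ω'} (fun _ => (1 : ℝ)) | ℱ t]) ω *
          Set.indicator {ω' | (t : ℕ∞) < S ω'} (fun _ => (1 : ℝ)) ω)
    (X : ℕ → Ω → ℝ)
    (hX : ∀ t ω, X t ω = ((n : ℝ) / p) ^ n - ((n : ℝ) / p) ^ (V t ω)) :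
    (∀ t : ℕ, ∀ᵐ ω ∂μ,
      Set.indicator {ω' | (t : ℕ∞) < S ω'} (fun _ => (1 : ℝ)) ω ≤
        (X t ω - (μ[X (t + 1) | ℱ t]) ω) *
          Set.indicator {ω' | (t : ℕ∞) < S ω'} (fun _ => (1 : ℝ)) ω) ∧
      ∫⁻ ω, (S ω : ℝ≥0∞) ∂μ ≤ ENNReal.ofReal (((n : ℝ) / p) ^ n) ∧
      ∫⁻ ω, (S ω : ℝ≥0∞) ∂μ < ⊤ := by
  set c : ℝ := (n : ℝ) / p with hc_def
  have hn2 : (2 : ℝ) ≤ (n : ℝ) := by exact_mod_cast hn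
  have hnc : (n : ℝ) ≤ c := by
    rw [hc_def, le_div_iff₀ hp0]; nlinarith
  have hc2 : 2 ≤ c := le_trans hn2 hnc
  have hc1 : 1 ≤ c := by linarith
  have hc0 : 0 < c := by linarith
  have hpc : p * c = (n : ℝ) := by
    rw [hc_def]; field_simp
  -- measurability of V t w.r.t. ℱ t
  have hVmeas : ∀ t, Measurable[ℱ t] (V t) := by
    intro t
    have hk : ∀ k : ℕ, MeasurableSet[ℱ t] (V t ⁻¹' {k}) := by
      intro k
      have : V t ⁻¹' {k} = (fun ω => (V t ω : ℝ)) ⁻¹' {(k : ℝ)} := by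
        ext ω; simp [Nat.cast_inj]
      rw [this]
      exact (hadapt t) (measurableSet_singleton _)
    exact @measurable_to_countable' ℕ Ω inferInstance inferInstance (ℱ t) (V t) hk
  have hcpow : ∀ t, StronglyMeasurable[ℱ t] (fun ω => c ^ (V t ω)) := fun t =>
    (measurable_from_top.comp (hVmeas t)).stronglyMeasurable
  have hXmF : ∀ t, StronglyMeasurable[ℱ t] (X t) := by
    intro t
    have : X t = fun ω => c ^ n - c ^ (V t ω) := funext fun ω => hX t ω
    rw [this]
    exact stronglyMeasurable_const.sub (hcpow t)
  have hXm : ∀ t, StronglyMeasurable (X t) := fun t => (hXmF t).mono (ℱ.le t)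
  -- bounds on X
  have hvpow1 : ∀ t ω, 1 ≤ c ^ (V t ω) := fun t ω => one_le_pow₀ hc1
  have hvpowle : ∀ t ω, c ^ (V t ω) ≤ c ^ n := fun t ω =>
    pow_le_pow_right₀ hc1 (hrange t ω)
  have hX0 : ∀ t ω, 0 ≤ X t ω := by
    intro t ω; rw [hX]; have := hvpowle t ω; linarith
  have hXle : ∀ t ω, X t ω ≤ c ^ n := by
    intro t ω; rw [hX]; have := hvpow1 t ω; linarith
  have hXint : ∀ t, Integrable (X t) μ := by
    intro t
    refine Integrable.mono' (integrable_const (c ^ n)) (hXm t).aestronglyMeasurable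
      (ae_of_all _ fun ω => ?_)
    rw [Real.norm_eq_abs, abs_le]
    exact ⟨by nlinarith [hX0 t ω, pow_pos hc0 n], hXle t ω⟩
  -- the events
  set A : ℕ → Set Ω := fun t => {ω' | (t : ℕ∞) < S ω'} with hA_def
  have hA_iff : ∀ t ω, ω ∈ A t ↔ ∀ s ≤ t, V s ω ≠ n := by
    intro t ω
    constructor
    · intro h s hs hVs
      have hmem : (s : ℕ∞) ∈ ((↑) '' {t : ℕ | V t ω = n}) := ⟨s, hVs, rfl⟩
      have : S ω ≤ (s : ℕ∞) := by rw [hS]; exact sInf_le hmem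
      have : S ω ≤ (t : ℕ∞) := le_trans this (by exact_mod_cast hs)
      exact absurd h (not_lt.mpr this)
    · intro h
      have : (t : ℕ∞) + 1 ≤ S ω := by
        rw [hS]
        refine le_sInf fun b hb => ?_
        obtain ⟨s, hs, rfl⟩ := hb
        have hts : t < s := by
          by_contra hc
          exact h s (not_lt.mp hc) hs
        have : (t : ℕ∞) < (s : ℕ∞) := by exact_mod_cast hts
        exact (ENat.add_one_le_iff (by simp)).mpr this
      exact lt_of_lt_of_le ((ENat.add_one_le_iff (by simp)).mp le_rfl) this
  have hAmF : ∀ t, MeasurableSet[ℱ t] (A t) := by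
    intro t
    have : A t = ⋂ s ∈ Finset.range (t + 1), {ω | V s ω ≠ n} := by
      ext ω
      simp only [Finset.mem_range, Set.mem_iInter, Set.mem_setOf_eq, Nat.lt_succ_iff]
      exact hA_iff t ω
    rw [this]
    refine MeasurableSet.biInter (Set.to_countable _) fun s hs => ?_
    have hst : s ≤ t := Nat.lt_succ_iff.mp (Finset.mem_range.mp hs)
    exact ℱ.mono hst _ (((hVmeas s) (measurableSet_singleton n)).compl)
  have hAm : ∀ t, MeasurableSet (A t) := fun t => (ℱ.le t) _ (hAmF t)
  have hAmono : ∀ t, A (t + 1) ⊆ A t := by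
    intro t ω hω
    simp only [hA_def, Set.mem_setOf_eq] at hω ⊢
    refine lt_trans ?_ hω
    exact_mod_cast Nat.lt_succ_self t
  -- Part 1: the drift inequality
  have hdrift : ∀ t : ℕ, ∀ᵐ ω ∂μ,
      Set.indicator (A t) (fun _ => (1 : ℝ)) ω ≤
        (X t ω - (μ[X (t + 1) | ℱ t]) ω) * Set.indicator (A t) (fun _ => (1 : ℝ)) ω := by
    intro t
    set B : Set Ω := {ω' | V t ω' < V (t + 1) ω'} with hB_def
    have hBm : MeasurableSet B := by
      have : B = {ω | ((V t ω : ℝ)) < ((V (t + 1) ω : ℝ))} := by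
        ext ω; simp [hB_def, Nat.cast_lt]
      rw [this]
      exact measurableSet_lt ((hadapt t).mono (ℱ.le t) le_rfl)
        ((hadapt (t + 1)).mono (ℱ.le (t + 1)) le_rfl)
    set IB : Ω → ℝ := Set.indicator B (fun _ => (1 : ℝ)) with hIB_def
    have hIBint : Integrable IB μ := (integrable_const (1 : ℝ)).indicator hBm
    set f : Ω → ℝ := fun ω => c * c ^ (V t ω) - 1 with hf_def
    have hfmF : StronglyMeasurable[ℱ t] f :=
      (stronglyMeasurable_const.mul (hcpow t)).sub stronglyMeasurable_const
    have hfbound : ∀ ω, 0 ≤ f ω ∧ f ω ≤ c * c ^ n := by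
      intro ω
      constructor
      · have h1 := hvpow1 t ω
        have h2 : c * 1 ≤ c * c ^ (V t ω) := mul_le_mul_of_nonneg_left h1 (le_of_lt hc0)
        simp only [hf_def]; linarith
      · have h2 : c * c ^ (V t ω) ≤ c * c ^ n :=
          mul_le_mul_of_nonneg_left (hvpowle t ω) (le_of_lt hc0)
        simp only [hf_def]; linarith
    have hfIBint : Integrable (f * IB) μ := by
      refine Integrable.mono' (integrable_const (c * c ^ n))
        ((((hfmF.mono (ℱ.le t))).mul (hIBint.aestronglyMeasurable.stronglyMeasurable_mk)).aestronglyMeasurable.congr ?_)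
        (ae_of_all _ fun ω => ?_)
      · filter_upwards [hIBint.aestronglyMeasurable.ae_eq_mk] with ω hω
        simp [Pi.mul_apply, hω]
      · rw [Real.norm_eq_abs, Pi.mul_apply, abs_mul]
        have h1 := (hfbound ω).1
        have h2 := (hfbound ω).2
        have h3 : |IB ω| ≤ 1 := by
          rw [hIB_def]
          by_cases h : ω ∈ B <;> simp [Set.indicator_apply, h]
        calc |f ω| * |IB ω| ≤ |f ω| * 1 := by
              exact mul_le_mul_of_nonneg_left h3 (abs_nonneg _)
          _ = |f ω| := mul_one _
          _ ≤ c * c ^ n := by rw [abs_of_nonneg h1]; exact h2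
    -- conditional expectation of `fun ω => f ω * IB ω + 1`
    have hpull : μ[f * IB | ℱ t] =ᵐ[μ] f * μ[IB | ℱ t] :=
      condExp_mul_of_stronglyMeasurable_left hfmF hfIBint hIBint
    have hpowint : Integrable (fun ω => c ^ (V (t + 1) ω)) μ := by
      refine Integrable.mono' (integrable_const (c ^ n))
        ((hcpow (t + 1)).mono (ℱ.le (t + 1))).aestronglyMeasurable (ae_of_all _ fun ω => ?_)
      rw [Real.norm_eq_abs, abs_of_pos (pow_pos hc0 _)]
      exact hvpowle (t + 1) ω
    have hptwise : ∀ ω, f ω * IB ω + 1 ≤ c ^ (V (t + 1) ω) := by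
      intro ω
      by_cases h : ω ∈ B
      · have hlt : V t ω < V (t + 1) ω := h
        have : c ^ (V t ω + 1) ≤ c ^ (V (t + 1) ω) := pow_le_pow_right₀ hc1 hlt
        rw [hIB_def, Set.indicator_of_mem h]
        rw [hf_def]
        simp only [mul_one]
        rw [pow_succ] at this
        nlinarith
      · rw [hIB_def, Set.indicator_of_notMem h]
        simpa using hvpow1 (t + 1) ω
    have hmono : μ[f * IB + (fun _ => (1:ℝ)) | ℱ t] ≤ᵐ[μ] μ[fun ω => c ^ (V (t + 1) ω) | ℱ t] :=
      condExp_mono (hfIBint.add (integrable_const 1)) hpowint (ae_of_all _ hptwise)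
    have hadd : μ[f * IB + (fun _ => (1:ℝ)) | ℱ t] =ᵐ[μ]
        μ[f * IB | ℱ t] + μ[(fun _ => (1:ℝ)) | ℱ t] :=
      condExp_add hfIBint (integrable_const 1) _
    have hconst : μ[(fun _ => (1:ℝ)) | ℱ t] = fun _ => (1:ℝ) := condExp_const (ℱ.le t) 1
    have hXdecomp : μ[X (t + 1) | ℱ t] =ᵐ[μ]
        (fun _ => c ^ n) - μ[fun ω => c ^ (V (t + 1) ω) | ℱ t] := by
      have h1 : X (t + 1) = (fun _ => c ^ n) - (fun ω => c ^ (V (t + 1) ω)) :=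
        funext fun ω => hX (t + 1) ω
      calc μ[X (t + 1) | ℱ t]
          =ᵐ[μ] μ[(fun _ => c ^ n) | ℱ t] - μ[fun ω => c ^ (V (t + 1) ω) | ℱ t] := by
            rw [h1]; exact condExp_sub (integrable_const _) hpowint _
        _ =ᵐ[μ] (fun _ => c ^ n) - μ[fun ω => c ^ (V (t + 1) ω) | ℱ t] := by
            rw [condExp_const (ℱ.le t)]
    filter_upwards [hup t, hpull, hmono, hadd, hXdecomp] with ω h1 h2 h3 h4 h5
    by_cases hmem : ω ∈ A t
    · rw [Set.indicator_of_mem hmem]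
      rw [Set.indicator_of_mem hmem] at h1
      rw [mul_one]
      set v : ℝ := c ^ (V t ω) with hv_def
      have hv1 : 1 ≤ v := hvpow1 t ω
      have hq : p ≤ (μ[IB | ℱ t]) ω := by
        rw [mul_one, mul_one] at h1; exact h1
      have hq0 : p * 1 ≤ (μ[IB | ℱ t]) ω * 1 := by simpa using hq
      -- compute the drift
      have hXt : X t ω = c ^ n - v := hX t ω
      have hcond : (μ[X (t + 1) | ℱ t]) ω =
          c ^ n - (μ[fun ω => c ^ (V (t + 1) ω) | ℱ t]) ω := h5
      have hlow : (c * v - 1) * (μ[IB | ℱ t]) ω + 1 ≤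
          (μ[fun ω => c ^ (V (t + 1) ω) | ℱ t]) ω := by
        have := h3
        rw [h4] at this
        have h2' : (μ[f * IB | ℱ t]) ω = f ω * (μ[IB | ℱ t]) ω := h2
        simp only [Pi.add_apply, Pi.sub_apply, hconst] at this
        rw [h2'] at this
        simpa [hf_def] using this
      have hcv : 0 ≤ c * v - 1 := by nlinarith
      have hqp : (c * v - 1) * p + 1 ≤ (c * v - 1) * (μ[IB | ℱ t]) ω + 1 := by
        nlinarith
      have hfinal : (c * v - 1) * p + 1 = (n : ℝ) * v - p + 1 := by
        have : (c * v - 1) * p = p * c * v - p := by ring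
        rw [this, hpc]
      rw [hXt, hcond]
      have : 1 ≤ (μ[fun ω => c ^ (V (t + 1) ω) | ℱ t]) ω - v := by
        have h6 : (c * v - 1) * p + 1 ≤ (μ[fun ω => c ^ (V (t + 1) ω) | ℱ t]) ω :=
          le_trans hqp hlow
        rw [hfinal] at h6
        nlinarith
      linarith
    · rw [Set.indicator_of_notMem hmem, mul_zero]
  have hbound : ∫⁻ ω, (S ω : ℝ≥0∞) ∂μ ≤ ENNReal.ofReal (c ^ n) := by
    -- key single-step inequality
    have hIAint : ∀ t, Integrable (Set.indicator (A t) (fun _ => (1:ℝ))) μ := fun t =>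
      (integrable_const (1 : ℝ)).indicator (hAm t)
    have hkey : ∀ t : ℕ, (μ (A t)).toReal + ∫ ω in A (t + 1), X (t + 1) ω ∂μ ≤
        ∫ ω in A t, X t ω ∂μ := by
      intro t
      have hfsub : Integrable (fun ω => X t ω - (μ[X (t + 1) | ℱ t]) ω) μ :=
        (hXint t).sub integrable_condExp
      have hmul : ∀ ω, (X t ω - (μ[X (t + 1) | ℱ t]) ω) *
          Set.indicator (A t) (fun _ => (1:ℝ)) ω =
          Set.indicator (A t) (fun ω => X t ω - (μ[X (t + 1) | ℱ t]) ω) ω := by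
        intro ω
        by_cases h : ω ∈ A t <;> simp [Set.indicator_apply, h]
      have hint1 : ∫ ω, Set.indicator (A t) (fun _ => (1:ℝ)) ω ∂μ = (μ (A t)).toReal := by
        rw [integral_indicator_const _ (hAm t)]; simp [measureReal_def]
      have hstep : (μ (A t)).toReal ≤
          ∫ ω, Set.indicator (A t) (fun ω => X t ω - (μ[X (t + 1) | ℱ t]) ω) ω ∂μ := by
        rw [← hint1]
        refine integral_mono_ae (hIAint t) (hfsub.indicator (hAm t)) ?_
        filter_upwards [hdrift t] with ω hω
        rw [← hmul ω]; exact hω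
      rw [integral_indicator (hAm t)] at hstep
      have hsplit : ∫ ω in A t, (X t ω - (μ[X (t + 1) | ℱ t]) ω) ∂μ =
          (∫ ω in A t, X t ω ∂μ) - ∫ ω in A t, (μ[X (t + 1) | ℱ t]) ω ∂μ :=
        integral_sub ((hXint t).integrableOn) (integrable_condExp.integrableOn)
      have hce : ∫ ω in A t, (μ[X (t + 1) | ℱ t]) ω ∂μ = ∫ ω in A t, X (t + 1) ω ∂μ :=
        setIntegral_condExp (ℱ.le t) (hXint (t + 1)) (hAmF t)
      have hmono2 : ∫ ω in A (t + 1), X (t + 1) ω ∂μ ≤ ∫ ω in A t, X (t + 1) ω ∂μ :=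
        setIntegral_mono_set ((hXint (t + 1)).integrableOn)
          (ae_of_all _ fun ω => hX0 (t + 1) ω) (HasSubset.Subset.eventuallyLE (hAmono t))
      rw [hsplit, hce] at hstep
      linarith
    -- telescoping
    have hpartial : ∀ T : ℕ, ∑ t ∈ Finset.range T, (μ (A t)).toReal ≤ c ^ n := by
      intro T
      have htel : ∀ T : ℕ, ∑ t ∈ Finset.range T, (μ (A t)).toReal + ∫ ω in A T, X T ω ∂μ ≤
          ∫ ω in A 0, X 0 ω ∂μ := by
        intro T
        induction T with
        | zero => simp
        | succ T ih =>
          rw [Finset.sum_range_succ]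
          have := hkey T
          linarith
      have h0 : ∫ ω in A 0, X 0 ω ∂μ ≤ c ^ n := by
        calc ∫ ω in A 0, X 0 ω ∂μ ≤ ∫ _ω in A 0, c ^ n ∂μ :=
              setIntegral_mono_on ((hXint 0).integrableOn) ((integrableOn_const_iff).mpr (Or.inr (measure_lt_top _ _)))
                (hAm 0) (fun ω _ => hXle 0 ω)
          _ = (μ (A 0)).toReal * c ^ n := by rw [setIntegral_const]; simp [smul_eq_mul, measureReal_def]
          _ ≤ 1 * c ^ n := by
              refine mul_le_mul_of_nonneg_right ?_ (by positivity)
              exact ENNReal.toReal_le_of_le_ofReal zero_le_one (by simpa using prob_le_one)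
          _ = c ^ n := one_mul _
      have hTnn : 0 ≤ ∫ ω in A T, X T ω ∂μ :=
        setIntegral_nonneg (hAm T) (fun ω _ => hX0 T ω)
      have := htel T
      linarith
    -- rewrite the lintegral as a sum
    have hScast : ∀ ω, (S ω : ℝ≥0∞) = ∑' t : ℕ, Set.indicator (A t) (1 : Ω → ℝ≥0∞) ω := by
      intro ω
      have hind : ∀ t : ℕ, Set.indicator (A t) (1 : Ω → ℝ≥0∞) ω =
          if (t : ℕ∞) < S ω then 1 else 0 := by
        intro t
        by_cases h : (t : ℕ∞) < S ω <;> simp [Set.indicator_apply, hA_def, h]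
      simp_rw [hind]
      cases hSω : S ω with
      | top =>
        have : ∀ t : ℕ, ((t : ℕ∞) < (⊤ : ℕ∞)) := fun t => lt_of_le_of_ne le_top (by simp)
        simp only [this, if_true]
        rw [ENNReal.tsum_const_eq_top_of_ne_zero one_ne_zero]
        rfl
      | coe k =>
        have : ∀ t : ℕ, ((t : ℕ∞) < (k : ℕ∞)) ↔ t < k := by exact_mod_cast fun t => Iff.rfl
        simp_rw [this]
        rw [tsum_eq_sum (s := Finset.range k) (fun t ht => by
          simp [Finset.mem_range] at ht; simp [ht, Nat.not_lt.mpr ht])]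
        rw [Finset.sum_ite_of_true (fun t ht => Finset.mem_range.mp ht)]
        simp
    have hlin : ∫⁻ ω, (S ω : ℝ≥0∞) ∂μ = ∑' t : ℕ, μ (A t) := by
      simp_rw [hScast]
      rw [lintegral_tsum (fun t => (measurable_one.indicator (hAm t)).aemeasurable)]
      congr 1
      funext t
      exact lintegral_indicator_one (hAm t)
    rw [hlin]
    rw [ENNReal.tsum_eq_iSup_sum' (fun T => Finset.range T) Finset.exists_nat_subset_range]
    refine iSup_le fun T => ?_
    calc ∑ t ∈ Finset.range T, μ (A t)
        = ∑ t ∈ Finset.range T, ENNReal.ofReal ((μ (A t)).toReal) :=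
          Finset.sum_congr rfl fun t _ => (ENNReal.ofReal_toReal (measure_ne_top μ _)).symm
      _ = ENNReal.ofReal (∑ t ∈ Finset.range T, (μ (A t)).toReal) :=
          (ENNReal.ofReal_sum_of_nonneg fun t _ => ENNReal.toReal_nonneg).symm
      _ ≤ ENNReal.ofReal (c ^ n) := ENNReal.ofReal_le_ofReal (hpartial T)
  exact ⟨hdrift, hbound, lt_of_le_of_lt hbound ENNReal.ofReal_lt_top⟩
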